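/- Let n ≥ 1 and let a, b : {1,…,n} → ℕ be processing times. Define completion times on the second machine recursively by D_0 = 0 and D_k = max(D_{k-1}, A_k) + b_k for 1 ≤ k ≤ n, where A_k = ∑_{i=1}^{k} a_i is the completion time of job k on the first machine. Then the makespan satisfies D_n = max_{1 ≤ k ≤ n} ( ∑_{i=1}^{k} a_i + ∑_{j=k}^{n} b_j ). -/
import Mathlib


/-- Two-machine flow shop: jobs `1, …, n` with processing times
`a i` on machine `M1` and `b i` on machine `M2`.  The completion times on the
second machine satisfy `D 0 = 0` and `D k = max (D (k-1)) (A k) + b k` where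
`A k = ∑_{i=1}^k a i`.  Then the makespan satisfies
`D n = max_{1 ≤ k ≤ n} (∑_{i=1}^k a i + ∑_{j=k}^n b j)`. -/
theorem flowshop_makespan_formula (n : ℕ) (hn : 1 ≤ n) (a b : ℕ → ℕ) (D : ℕ → ℕ)
    (hD0 : D 0 = 0)
    (hD : ∀ k, 1 ≤ k → k ≤ n →
      D k = max (D (k - 1)) (∑ i ∈ Finset.Icc 1 k, a i) + b k) :
    D n = (Finset.Icc 1 n).sup
      (fun k => ∑ i ∈ Finset.Icc 1 k, a i + ∑ j ∈ Finset.Icc k n, b j) := by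
  have key : ∀ m, 1 ≤ m → m ≤ n →
      ∀ (h : (Finset.Icc 1 m).Nonempty),
      D m = (Finset.Icc 1 m).sup' h
        (fun k => ∑ i ∈ Finset.Icc 1 k, a i + ∑ j ∈ Finset.Icc k m, b j) := by
    intro m hm
    induction m, hm using Nat.le_induction with
    | base =>
      intro _ h
      rw [hD 1 le_rfl hn, hD0]
      simp
    | succ m hm ih =>
      intro hmn h
      have hmn' : m ≤ n := le_trans (Nat.le_succ m) hmn
      have hne : (Finset.Icc 1 m).Nonempty := ⟨1, by simp [hm]⟩
      rw [hD (m + 1) (by omega) hmn, Nat.add_sub_cancel, ih hmn' hne]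
      have hins : Finset.Icc 1 (m + 1) = insert (m + 1) (Finset.Icc 1 m) := by
        rw [(Finset.insert_Icc_right_eq_Icc_add_one (by omega)).symm]
      rw [show h = hins ▸ h from rfl]
      -- rewrite RHS
      have : (Finset.Icc 1 (m+1)).sup' h
          (fun k => ∑ i ∈ Finset.Icc 1 k, a i + ∑ j ∈ Finset.Icc k (m+1), b j)
          = ((∑ i ∈ Finset.Icc 1 (m+1), a i + ∑ j ∈ Finset.Icc (m+1) (m+1), b j) ⊔
            (Finset.Icc 1 m).sup' hne
              (fun k => ∑ i ∈ Finset.Icc 1 k, a i + ∑ j ∈ Finset.Icc k (m+1), b j)) := by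
        rw [Finset.sup'_congr h hins (fun k _ => rfl)]
        exact Finset.sup'_insert hne _
      rw [this]
      have hstep : ∀ k ∈ Finset.Icc 1 m,
          (∑ i ∈ Finset.Icc 1 k, a i + ∑ j ∈ Finset.Icc k (m+1), b j)
          = (∑ i ∈ Finset.Icc 1 k, a i + ∑ j ∈ Finset.Icc k m, b j) + b (m+1) := by
        intro k hk
        simp only [Finset.mem_Icc] at hk
        rw [(Finset.insert_Icc_right_eq_Icc_add_one (by omega)).symm, Finset.sum_insert (by simp)]
        ring
      rw [Finset.sup'_congr hne rfl hstep]
      have hsup : (Finset.Icc 1 m).sup' hne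
          (fun k => (∑ i ∈ Finset.Icc 1 k, a i + ∑ j ∈ Finset.Icc k m, b j) + b (m+1))
          = (Finset.Icc 1 m).sup' hne
            (fun k => ∑ i ∈ Finset.Icc 1 k, a i + ∑ j ∈ Finset.Icc k m, b j) + b (m+1) := by
        exact (Finset.comp_sup'_eq_sup'_comp hne (· + b (m+1))
          (fun x y => (max_add_add_right x y (b (m+1))).symm) ).symm
      rw [hsup]
      simp only [Finset.Icc_self, Finset.sum_singleton]
      omega
  have hne : (Finset.Icc 1 n).Nonempty := ⟨1, by simp [hn]⟩
  rw [key n hn le_rfl hne, Finset.sup'_eq_sup]
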